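/- Let ν be a compactly supported Borel probability measure on ℝ such that ∫ y^{k−1} dν(y) = c_k for every k ≥ 1. Then for every polynomial p ∈ ℝ[X] and every x ∈ ℝ, H_t(p)(x) = ((1+ηx+σx²)/(1+σt))·∫ q_p(x,y) dν(y), where q_p is the two-variable polynomial (divided difference) determined by the identity p(y) − p(x) = (y−x)·q_p(x,y). -/

import Mathlib

open Polynomial Finset MeasureTheory

/-- Integral representation of `H_t`: if `ν` is a compactly supported probability
measure with moments `∫ y^{k−1} dν = c_k`, then for every polynomial `p` and real `x`,
`H_t(p)(x) = ((1+ηx+σx²)/(1+σt))·∫ q_p(x,y) dν(y)`, where `q_p` is the divided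
difference polynomial with `p(y) − p(x) = (y−x)·q_p(x,y)`. -/
theorem stmt11 (t η θ σ τ : ℝ) (ht : 0 < t) (hσ : 0 ≤ σ) (hτ : 0 ≤ τ)
    (hστ : σ * τ ≠ 1) (c : ℕ → ℝ) (hc1 : c 1 = 1)
    (hc : ∀ k : ℕ, 1 ≤ k →
      (1 + σ * t) * c (k + 1) =
        (θ - η * t) * c k +
          (t + τ) * ((∑ j ∈ Ico 1 k, c j * c (k - j)) +
            η * ∑ j ∈ range k, c (j + 1) * c (k - j) +
            σ * ∑ j ∈ range k, c (j + 2) * c (k - j)))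
    (H : Module.End ℝ (Polynomial ℝ))
    (hH : ∀ n : ℕ, H (X ^ n) =
      C (1 / (1 + σ * t)) * (1 + C η * X + C σ * X ^ 2) *
        ∑ k ∈ Icc 1 n, C (c k) * X ^ (n - k))
    (ν : Measure ℝ) (hprob : IsProbabilityMeasure ν)
    (hsupp : ∃ K : Set ℝ, IsCompact K ∧ ν Kᶜ = 0)
    (hmom : ∀ k : ℕ, 1 ≤ k → ∫ y : ℝ, y ^ (k - 1) ∂ν = c k) :
    ∀ (p : Polynomial ℝ) (q : MvPolynomial (Fin 2) ℝ),
      (∀ x y : ℝ, p.eval y - p.eval x = (y - x) * MvPolynomial.eval ![x, y] q) →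
      ∀ x : ℝ, (H p).eval x =
        ((1 + η * x + σ * x ^ 2) / (1 + σ * t)) *
          ∫ y : ℝ, MvPolynomial.eval ![x, y] q ∂ν := by
  obtain ⟨K, hK, hK0⟩ := hsupp
  have hmemae : ∀ᵐ y ∂ν, y ∈ K := by
    rw [MeasureTheory.ae_iff]
    exact hK0
  have hint : ∀ j : ℕ, Integrable (fun y : ℝ => y ^ j) ν := by
    intro j
    obtain ⟨M, hM⟩ := hK.exists_bound_of_continuousOn (continuous_pow j).continuousOn
    refine (integrable_const M).mono' ((continuous_pow j).aestronglyMeasurable) ?_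
    filter_upwards [hmemae] with y hy
    simpa using hM y hy
  have hintmom : ∀ j : ℕ, ∫ y, y ^ j ∂ν = c (j + 1) := by
    intro j
    have h := hmom (j + 1) (by omega)
    simpa using h
  intro p q hq x
  set n := p.natDegree + 1 with hn
  set Q : Polynomial ℝ := ∑ i ∈ range n, C (p.coeff i) *
      ∑ j ∈ range i, C (x ^ (i - 1 - j)) * X ^ j with hQdef
  have hQ : ∀ y : ℝ, p.eval y - p.eval x = (y - x) * Q.eval y := by
    intro y
    rw [Polynomial.eval_eq_sum_range (x := y), Polynomial.eval_eq_sum_range (x := x),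
      ← Finset.sum_sub_distrib]
    simp only [hQdef, Polynomial.eval_finset_sum, eval_mul, eval_C, eval_pow, eval_X]
    rw [Finset.mul_sum]
    refine Finset.sum_congr rfl fun i _ => ?_
    have h := geom_sum₂_mul y x i
    have h2 : (∑ j ∈ range i, x ^ (i - 1 - j) * y ^ j) = ∑ j ∈ range i, y ^ j * x ^ (i - 1 - j) :=
      Finset.sum_congr rfl fun j _ => mul_comm _ _
    rw [h2]
    linear_combination (-(p.coeff i)) * h
  set Q' : Polynomial ℝ := MvPolynomial.aeval ![Polynomial.C x, Polynomial.X] q with hQ'def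
  have hQ'e : ∀ y : ℝ, Q'.eval y = MvPolynomial.eval ![x, y] q := by
    intro y
    have h1 : Q'.eval y = Polynomial.aeval y Q' := by
      rw [Polynomial.coe_aeval_eq_eval]
    rw [h1, hQ'def, MvPolynomial.comp_aeval_apply]
    have h2 : (fun i => Polynomial.aeval y (![Polynomial.C x, Polynomial.X] i)) = ![x, y] := by
      funext i
      fin_cases i <;> simp
    rw [h2, ← MvPolynomial.coe_aeval_eq_eval]
    rfl
  have hQQ' : Q' = Q := by
    apply Polynomial.eq_of_infinite_eval_eq
    apply Set.Infinite.mono (s := {x}ᶜ)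
    · intro y hy
      have hyx : y ≠ x := by simpa using hy
      have h1 : (y - x) * Q'.eval y = (y - x) * Q.eval y := by
        rw [hQ'e y, ← hq x y, hQ y]
      exact mul_left_cancel₀ (sub_ne_zero.mpr hyx) h1
    · exact (Set.finite_singleton x).infinite_compl
  have hq' : ∀ y : ℝ, MvPolynomial.eval ![x, y] q = Q.eval y := by
    intro y; rw [← hQ'e y, hQQ']
  have hQint : ∫ y, Q.eval y ∂ν
      = ∑ i ∈ range n, p.coeff i * ∑ j ∈ range i, x ^ (i - 1 - j) * c (j + 1) := by
    have h1 : ∀ y : ℝ, Q.eval y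
        = ∑ i ∈ range n, ∑ j ∈ range i, p.coeff i * (x ^ (i - 1 - j) * y ^ j) := by
      intro y
      simp only [hQdef, Polynomial.eval_finset_sum, eval_mul, eval_C, eval_pow, eval_X,
        Finset.mul_sum]
    simp_rw [h1]
    rw [integral_finset_sum _ (fun i _ =>
      integrable_finset_sum _ (fun j _ => ((hint j).const_mul _).const_mul _))]
    refine Finset.sum_congr rfl fun i _ => ?_
    rw [integral_finset_sum _ (fun j _ => ((hint j).const_mul _).const_mul _), Finset.mul_sum]
    refine Finset.sum_congr rfl fun j _ => ?_
    rw [MeasureTheory.integral_const_mul, MeasureTheory.integral_const_mul, hintmom j]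
  have hHp : (H p).eval x = (1 / (1 + σ * t)) * (1 + η * x + σ * x ^ 2) *
      ∑ i ∈ range n, p.coeff i * ∑ k ∈ Icc 1 i, c k * x ^ (i - k) := by
    conv_lhs => rw [p.as_sum_range]
    rw [map_sum, Polynomial.eval_finset_sum, Finset.mul_sum]
    refine Finset.sum_congr rfl fun i _ => ?_
    rw [← Polynomial.C_mul_X_pow_eq_monomial, ← Polynomial.smul_eq_C_mul, _root_.map_smul,
      Polynomial.eval_smul, hH i]
    simp only [eval_mul, eval_add, eval_one, eval_C, eval_X, eval_pow,
      Polynomial.eval_finset_sum, smul_eq_mul]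
    ring
  have hinner : ∀ i : ℕ, (∑ k ∈ Icc 1 i, c k * x ^ (i - k))
      = ∑ j ∈ range i, x ^ (i - 1 - j) * c (j + 1) := by
    intro i
    refine Finset.sum_nbij' (i := fun k => k - 1) (j := fun j => j + 1) ?_ ?_ ?_ ?_ ?_
    · intro k hk
      simp only [Finset.mem_Icc] at hk
      simp only [Finset.mem_range]; omega
    · intro j hj
      simp only [Finset.mem_range] at hj
      simp only [Finset.mem_Icc]; omega
    · intro k hk
      simp only [Finset.mem_Icc] at hk
      show k - 1 + 1 = k
      omega
    · intro j hj
      show j + 1 - 1 = j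
      omega
    · intro k hk
      simp only [Finset.mem_Icc] at hk
      have h1 : k - 1 + 1 = k := by omega
      have h2 : i - 1 - (k - 1) = i - k := by omega
      rw [h1, h2, mul_comm]
  simp_rw [hq', hQint, hHp]
  rw [Finset.mul_sum, Finset.mul_sum]
  refine Finset.sum_congr rfl fun i _ => ?_
  rw [hinner i]
  ring
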